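/- Let μ ≥ 0 be real, let G_c(μ) be the unique real root x > 1 of −3x³ + 4x² − μx + 2μ = 0, and set g_c(μ) = (G_c(μ) − 1)/(G_c(μ)²·(G_c(μ)² + μ)). Then for every real g with 0 ≤ g ≤ g_c(μ), the sum S = ∑_{n=0}^{∞} α_n(μ)·g^n satisfies the algebraic equation S = 1 + g·S²·(S² + μ). -/

import Mathlib

/-- `α_n(μ) = ∑_{q=0}^{n} μ^q/(3n − 2q + 1) · C(n,q) · C(4n − 2q, n)`, the
coefficient of `g^n` in the leading-order two-point function `G_LO(g, μ)`. -/
noncomputable def alphaCoeff (μ : ℝ) (n : ℕ) : ℝ :=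
  ∑ q ∈ Finset.range (n + 1),
    μ ^ q / (3 * (n : ℝ) - 2 * (q : ℝ) + 1) * (Nat.choose n q : ℝ) *
      (Nat.choose (4 * n - 2 * q) n : ℝ)

open Finset

/-- Raney-type forest counting numbers. -/
noncomputable def ncoef : ℕ → ℕ → ℕ → ℝ
  | 0, m, q => if m = 0 ∧ q = 0 then 1 else 0
  | (c+1), m, q => (c+1) * (Nat.factorial (4*m+2*q+c)) /
      (Nat.factorial m * Nat.factorial q * Nat.factorial (3*m+q+c+1))

lemma ncoef_nonneg (c m q : ℕ) : 0 ≤ ncoef c m q := by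
  cases c with
  | zero =>
    show (0:ℝ) ≤ if m = 0 ∧ q = 0 then 1 else 0
    split <;> norm_num
  | succ c =>
    show (0:ℝ) ≤ (c+1) * (Nat.factorial (4*m+2*q+c)) /
      (Nat.factorial m * Nat.factorial q * Nat.factorial (3*m+q+c+1))
    positivity

lemma ncoef_zero_zero (c : ℕ) : ncoef c 0 0 = 1 := by
  cases c with
  | zero => simp [ncoef]
  | succ c =>
    show ((c:ℝ)+1) * (Nat.factorial (4*0+2*0+c)) /
      (Nat.factorial 0 * Nat.factorial 0 * Nat.factorial (3*0+0+c+1)) = 1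
    have h3 : (Nat.factorial (3*0+0+c+1) : ℝ) ≠ 0 := Nat.cast_ne_zero.mpr (Nat.factorial_ne_zero _)
    rw [div_eq_one_iff_eq (by simpa using h3)]
    rw [show 3*0+0+c+1 = c+1 from by ring, show 4*0+2*0+c = c from by ring,
      Nat.factorial_succ c]
    simp [Nat.factorial]

lemma ncoef_eq (c m q : ℕ) (h : 4*m+2*q+c ≠ 0) :
    ncoef c m q = c * (Nat.factorial (4*m+2*q+c)) /
      ((4*m+2*q+c) * (Nat.factorial m * Nat.factorial q * Nat.factorial (3*m+q+c))) := by
  cases c with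
  | zero =>
    have h' : ¬ (m = 0 ∧ q = 0) := by omega
    show (if m = 0 ∧ q = 0 then (1:ℝ) else 0) = _
    simp [h']
  | succ c =>
    show ((c:ℝ)+1) * (Nat.factorial (4*m+2*q+c)) /
      (Nat.factorial m * Nat.factorial q * Nat.factorial (3*m+q+c+1)) = _
    rw [show 4*m+2*q+(c+1) = (4*m+2*q+c)+1 from by ring,
        show 3*m+q+(c+1) = 3*m+q+c+1 from by ring,
        Nat.factorial_succ (4*m+2*q+c)]
    have h1 : (Nat.factorial m : ℝ) ≠ 0 := Nat.cast_ne_zero.mpr (Nat.factorial_ne_zero m)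
    have h2 : (Nat.factorial q : ℝ) ≠ 0 := Nat.cast_ne_zero.mpr (Nat.factorial_ne_zero q)
    have h3 : (Nat.factorial (3*m+q+c+1) : ℝ) ≠ 0 := Nat.cast_ne_zero.mpr (Nat.factorial_ne_zero _)
    have h4 : ((4*m+2*q+c : ℕ):ℝ) + 1 ≠ 0 := by positivity
    field_simp
    push_cast
    ring

lemma ncoef_rec_m (c m : ℕ) : ncoef (c+1) (m+1) 0 = ncoef c (m+1) 0 + ncoef (c+4) m 0 := by
  rw [ncoef_eq (c+1) (m+1) 0 (by omega), ncoef_eq c (m+1) 0 (by omega),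
      ncoef_eq (c+4) m 0 (by omega)]
  rw [show 4*(m+1)+2*0+(c+1) = (4*m+c+4)+1 from by ring,
      show 3*(m+1)+0+(c+1) = (3*m+c+3)+1 from by ring,
      show 4*(m+1)+2*0+c = 4*m+c+4 from by ring,
      show 3*(m+1)+0+c = 3*m+c+3 from by ring,
      show 4*m+2*0+(c+4) = 4*m+c+4 from by ring,
      show 3*m+0+(c+4) = (3*m+c+3)+1 from by ring,
      Nat.factorial_succ (4*m+c+4), Nat.factorial_succ (3*m+c+3), Nat.factorial_succ m]
  have h1 : (Nat.factorial m : ℝ) ≠ 0 := Nat.cast_ne_zero.mpr (Nat.factorial_ne_zero m)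
  have h2 : (Nat.factorial (3*m+c+3) : ℝ) ≠ 0 := Nat.cast_ne_zero.mpr (Nat.factorial_ne_zero _)
  have h5 : ((4*m+c+4 : ℕ):ℝ) ≠ 0 := by positivity
  have h6 : ((4*m+c+4 : ℕ):ℝ) + 1 ≠ 0 := by positivity
  have h7 : ((m:ℝ) + 1) ≠ 0 := by positivity
  have h8 : ((3*m+c+3 : ℕ):ℝ) + 1 ≠ 0 := by positivity
  field_simp
  push_cast
  ring

lemma ncoef_rec_q (c q : ℕ) : ncoef (c+1) 0 (q+1) = ncoef c 0 (q+1) + ncoef (c+2) 0 q := by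
  rw [ncoef_eq (c+1) 0 (q+1) (by omega), ncoef_eq c 0 (q+1) (by omega),
      ncoef_eq (c+2) 0 q (by omega)]
  rw [show 4*0+2*(q+1)+(c+1) = (2*q+c+2)+1 from by ring,
      show 3*0+(q+1)+(c+1) = (q+c+1)+1 from by ring,
      show 4*0+2*(q+1)+c = 2*q+c+2 from by ring,
      show 3*0+(q+1)+c = q+c+1 from by ring,
      show 4*0+2*q+(c+2) = 2*q+c+2 from by ring,
      show 3*0+q+(c+2) = (q+c+1)+1 from by ring,
      Nat.factorial_succ (2*q+c+2), Nat.factorial_succ (q+c+1), Nat.factorial_succ q]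
  have h1 : (Nat.factorial q : ℝ) ≠ 0 := Nat.cast_ne_zero.mpr (Nat.factorial_ne_zero q)
  have h2 : (Nat.factorial (q+c+1) : ℝ) ≠ 0 := Nat.cast_ne_zero.mpr (Nat.factorial_ne_zero _)
  have h5 : ((2*q+c+2 : ℕ):ℝ) ≠ 0 := by positivity
  have h6 : ((2*q+c+2 : ℕ):ℝ) + 1 ≠ 0 := by positivity
  have h7 : ((q:ℝ) + 1) ≠ 0 := by positivity
  have h8 : ((q+c+1 : ℕ):ℝ) + 1 ≠ 0 := by positivity
  field_simp
  push_cast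
  ring

lemma ncoef_rec_mq (c m q : ℕ) : ncoef (c+1) (m+1) (q+1) =
    ncoef c (m+1) (q+1) + ncoef (c+4) m (q+1) + ncoef (c+2) (m+1) q := by
  rw [ncoef_eq (c+1) (m+1) (q+1) (by omega), ncoef_eq c (m+1) (q+1) (by omega),
      ncoef_eq (c+4) m (q+1) (by omega), ncoef_eq (c+2) (m+1) q (by omega)]
  rw [show 4*(m+1)+2*(q+1)+(c+1) = (4*m+2*q+c+6)+1 from by ring,
      show 3*(m+1)+(q+1)+(c+1) = (3*m+q+c+4)+1 from by ring,
      show 4*(m+1)+2*(q+1)+c = 4*m+2*q+c+6 from by ring,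
      show 3*(m+1)+(q+1)+c = 3*m+q+c+4 from by ring,
      show 4*m+2*(q+1)+(c+4) = 4*m+2*q+c+6 from by ring,
      show 3*m+(q+1)+(c+4) = (3*m+q+c+4)+1 from by ring,
      show 4*(m+1)+2*q+(c+2) = 4*m+2*q+c+6 from by ring,
      show 3*(m+1)+q+(c+2) = (3*m+q+c+4)+1 from by ring,
      Nat.factorial_succ (4*m+2*q+c+6), Nat.factorial_succ (3*m+q+c+4),
      Nat.factorial_succ m, Nat.factorial_succ q]
  have h1 : (Nat.factorial m : ℝ) ≠ 0 := Nat.cast_ne_zero.mpr (Nat.factorial_ne_zero m)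
  have h2 : (Nat.factorial q : ℝ) ≠ 0 := Nat.cast_ne_zero.mpr (Nat.factorial_ne_zero q)
  have h3 : (Nat.factorial (3*m+q+c+4) : ℝ) ≠ 0 := Nat.cast_ne_zero.mpr (Nat.factorial_ne_zero _)
  have h5 : ((4*m+2*q+c+6 : ℕ):ℝ) ≠ 0 := by positivity
  have h6 : ((4*m+2*q+c+6 : ℕ):ℝ) + 1 ≠ 0 := by positivity
  have h7 : ((m:ℝ) + 1) ≠ 0 := by positivity
  have h7' : ((q:ℝ) + 1) ≠ 0 := by positivity
  have h8 : ((3*m+q+c+4 : ℕ):ℝ) + 1 ≠ 0 := by positivity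
  field_simp
  push_cast
  ring

/-- Generating polynomial in `μ` of forests of `c` trees with `n` internal nodes. -/
noncomputable def betaC (μ : ℝ) (c n : ℕ) : ℝ :=
  ∑ k ∈ range (n+1), ncoef c (n-k) k * μ^k

lemma betaC_nonneg (μ : ℝ) (hμ : 0 ≤ μ) (c n : ℕ) : 0 ≤ betaC μ c n := by
  apply Finset.sum_nonneg
  intro k _
  have := ncoef_nonneg c (n-k) k
  positivity

lemma betaC_zero (μ : ℝ) (c : ℕ) : betaC μ c 0 = 1 := by
  simp [betaC, ncoef_zero_zero]

lemma betaC_c0 (μ : ℝ) (n : ℕ) : betaC μ 0 n = if n = 0 then 1 else 0 := by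
  rcases Nat.eq_zero_or_pos n with h | h
  · subst h; simp [betaC_zero]
  · rw [if_neg (by omega)]
    apply Finset.sum_eq_zero
    intro k hk
    rw [mem_range] at hk
    have : ¬ (n - k = 0 ∧ k = 0) := by omega
    show (if n-k = 0 ∧ k = 0 then (1:ℝ) else 0) * μ^k = 0
    simp [this]

lemma betaC_succ (μ : ℝ) (c n : ℕ) :
    betaC μ (c+1) (n+1) = betaC μ c (n+1) + betaC μ (c+4) n + μ * betaC μ (c+2) n := by
  have key : ∀ k ∈ range (n+2), ncoef (c+1) (n+1-k) k * μ^k =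
      ncoef c (n+1-k) k * μ^k + (if k ≤ n then ncoef (c+4) (n-k) k * μ^k else 0)
        + (if k ≠ 0 then μ * (ncoef (c+2) (n+1-k) (k-1) * μ^(k-1)) else 0) := by
    intro k hk
    rw [mem_range] at hk
    rcases Nat.eq_zero_or_pos k with h0 | h0
    · subst h0
      simp only [Nat.sub_zero, if_pos (Nat.zero_le n), ne_eq, not_true_eq_false, if_neg,
        reduceIte]
      rw [ncoef_rec_m c n]
      ring
    · obtain ⟨k', rfl⟩ : ∃ k', k = k'+1 := ⟨k-1, by omega⟩
      simp only [Nat.succ_sub_succ, Nat.add_sub_cancel, Nat.sub_zero]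
      rw [if_pos (by omega : k'+1 ≠ 0)]
      rcases Nat.lt_or_ge k' n with hlt | hge
      · rw [if_pos (by omega : k'+1 ≤ n)]
        rw [show n-k' = (n-(k'+1))+1 from by omega]
        rw [ncoef_rec_mq c (n-(k'+1)) k']
        rw [show n-(k'+1)+1 = n-k' from by omega, pow_succ]
        ring
      · have hk' : k' = n := by omega
        rw [if_neg (by omega), show n-k' = 0 from by omega]
        rw [ncoef_rec_q c k', pow_succ]
        ring
  rw [betaC, Finset.sum_congr rfl key, Finset.sum_add_distrib, Finset.sum_add_distrib]
  have hB : (∑ k ∈ range (n+2), if k ≤ n then ncoef (c+4) (n-k) k * μ^k else 0)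
      = betaC μ (c+4) n := by
    rw [Finset.sum_range_succ, if_neg (by omega), add_zero]
    apply Finset.sum_congr rfl
    intro k hk
    rw [mem_range] at hk
    rw [if_pos (by omega)]
  have hC : (∑ k ∈ range (n+2),
      if k ≠ 0 then μ * (ncoef (c+2) (n+1-k) (k-1) * μ^(k-1)) else 0)
      = μ * betaC μ (c+2) n := by
    have h2 : ∀ k ∈ range (n+1),
        (if (k+1) ≠ 0 then μ * (ncoef (c+2) (n+1-(k+1)) (k+1-1) * μ^(k+1-1)) else 0)
        = μ * (ncoef (c+2) (n-k) k * μ^k) := by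
      intro k hk
      rw [if_pos (by omega : k+1 ≠ 0)]
      simp only [Nat.succ_sub_succ, Nat.add_sub_cancel, Nat.sub_zero]
    rw [Finset.sum_range_succ', Finset.sum_congr rfl h2,
        if_neg (by omega : ¬ (0:ℕ) ≠ 0), add_zero, ← Finset.mul_sum]
    rfl
  rw [hB, hC]
  rfl

lemma betaC_conv (μ : ℝ) : ∀ n c d : ℕ,
    ∑ i ∈ range (n+1), betaC μ c i * betaC μ d (n-i) = betaC μ (c+d) n := by
  intro n
  induction n using Nat.strong_induction_on with
  | _ n ih =>
    intro c d
    induction c with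
    | zero =>
      rw [zero_add]
      have h0 : ∀ i ∈ range (n+1), betaC μ 0 i * betaC μ d (n-i)
          = if i = 0 then betaC μ d n else 0 := by
        intro i hi
        rw [betaC_c0]
        split
        · subst ‹i = 0›; simp
        · simp
      rw [Finset.sum_congr rfl h0, Finset.sum_ite_eq' (range (n+1)) 0]
      rw [if_pos (by simp)]
    | succ c ihc =>
      cases n with
      | zero => simp [betaC_zero]
      | succ n' =>
        have hlt : n' < n'+1 := Nat.lt_succ_self n'
        rw [Finset.sum_range_succ']
        have h1 : ∀ i ∈ range (n'+1), betaC μ (c+1) (i+1) * betaC μ d (n'+1-(i+1))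
            = betaC μ c (i+1) * betaC μ d (n'-i) + betaC μ (c+4) i * betaC μ d (n'-i)
              + μ * (betaC μ (c+2) i * betaC μ d (n'-i)) := by
          intro i hi
          rw [betaC_succ, Nat.succ_sub_succ]
          ring
        rw [Finset.sum_congr rfl h1, Finset.sum_add_distrib, Finset.sum_add_distrib,
            ← Finset.mul_sum]
        rw [ih n' hlt (c+4) d, ih n' hlt (c+2) d]
        have h2 : ∑ i ∈ range (n'+1), betaC μ c (i+1) * betaC μ d (n'-i)
            = (∑ i ∈ range (n'+2), betaC μ c i * betaC μ d (n'+1-i))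
              - betaC μ c 0 * betaC μ d (n'+1) := by
          rw [Finset.sum_range_succ' (fun i => betaC μ c i * betaC μ d (n'+1-i)) (n'+1)]
          simp only [Nat.succ_sub_succ, Nat.sub_zero]
          ring
        rw [h2, ihc, betaC_zero, betaC_zero, one_mul]
        have h3 : betaC μ (c+1+d) (n'+1)
            = betaC μ (c+d) (n'+1) + betaC μ (c+d+4) n' + μ * betaC μ (c+d+2) n' := by
          rw [show c+1+d = (c+d)+1 from by ring]
          exact betaC_succ μ (c+d) n'
        rw [h3, show c+4+d = c+d+4 from by ring, show c+2+d = c+d+2 from by ring]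
        simp only [Nat.sub_zero]
        ring

lemma ncoef_one (m q : ℕ) : ncoef 1 m q =
    (Nat.factorial (4*m+2*q)) / (Nat.factorial m * Nat.factorial q * Nat.factorial (3*m+q+1)) := by
  show (((0:ℕ):ℝ)+1) * (Nat.factorial (4*m+2*q+0)) /
      (Nat.factorial m * Nat.factorial q * Nat.factorial (3*m+q+0+1)) = _
  norm_num

lemma alpha_eq_beta (μ : ℝ) (n : ℕ) : alphaCoeff μ n = betaC μ 1 n := by
  apply Finset.sum_congr rfl
  intro q hq
  rw [mem_range] at hq
  have hq' : q ≤ n := by omega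
  rw [ncoef_one]
  have e1 : 4*(n-q)+2*q = 4*n-2*q := by omega
  have e2 : 3*(n-q)+q+1 = (3*n-2*q)+1 := by omega
  have e3 : 4*n-2*q-n = 3*n-2*q := by omega
  rw [e1, e2]
  rw [Nat.cast_choose ℝ hq', Nat.cast_choose ℝ (show n ≤ 4*n-2*q by omega), e3]
  have e4 : (3*(n:ℝ) - 2*(q:ℝ) + 1) = ((3*n-2*q+1 : ℕ):ℝ) := by
    push_cast [Nat.cast_sub (show 2*q ≤ 3*n by omega)]
    ring
  rw [e4, Nat.factorial_succ (3*n-2*q)]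
  have h1 : (Nat.factorial n : ℝ) ≠ 0 := Nat.cast_ne_zero.mpr (Nat.factorial_ne_zero _)
  have h2 : (Nat.factorial q : ℝ) ≠ 0 := Nat.cast_ne_zero.mpr (Nat.factorial_ne_zero _)
  have h3 : (Nat.factorial (n-q) : ℝ) ≠ 0 := Nat.cast_ne_zero.mpr (Nat.factorial_ne_zero _)
  have h4 : (Nat.factorial (3*n-2*q) : ℝ) ≠ 0 := Nat.cast_ne_zero.mpr (Nat.factorial_ne_zero _)
  have h5 : ((3*n-2*q+1 : ℕ):ℝ) ≠ 0 := by positivity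
  have h6 : ((3*n-2*q : ℕ):ℝ) + 1 ≠ 0 := by positivity
  field_simp
  push_cast
  ring

lemma alphaCoeff_zero (μ : ℝ) : alphaCoeff μ 0 = 1 := by
  norm_num [alphaCoeff]

lemma alphaCoeff_succ (μ : ℝ) (n : ℕ) :
    alphaCoeff μ (n+1) = betaC μ 4 n + μ * betaC μ 2 n := by
  rw [alpha_eq_beta]
  have h := betaC_succ μ 0 n
  norm_num [betaC_c0] at h
  exact h

lemma alphaCoeff_nonneg (μ : ℝ) (hμ : 0 ≤ μ) (n : ℕ) : 0 ≤ alphaCoeff μ n := by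
  rw [alpha_eq_beta]; exact betaC_nonneg μ hμ 1 n

lemma betaC_two (μ : ℝ) (n : ℕ) :
    betaC μ 2 n = ∑ i ∈ range (n+1), alphaCoeff μ i * alphaCoeff μ (n-i) := by
  have h := betaC_conv μ n 1 1
  rw [← h]
  apply Finset.sum_congr rfl
  intro i _
  rw [alpha_eq_beta, alpha_eq_beta]

lemma betaC_four (μ : ℝ) (n : ℕ) :
    betaC μ 4 n = ∑ i ∈ range (n+1), betaC μ 2 i * betaC μ 2 (n-i) := by
  have h := betaC_conv μ n 2 2
  rw [← h]

lemma conv_partial_le (f : ℕ → ℝ) (hf : ∀ i, 0 ≤ f i) (N : ℕ) :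
    ∑ n ∈ range N, ∑ i ∈ range (n+1), f i * f (n-i) ≤ (∑ i ∈ range N, f i)^2 := by
  have step1 : ∑ n ∈ range N, ∑ i ∈ range (n+1), f i * f (n-i)
      = ∑ i ∈ range N, ∑ j ∈ range (N-i), f i * f j := by
    rw [Finset.sum_sigma' (range N) (fun n => range (n+1)) (fun n i => f i * f (n-i)),
        Finset.sum_sigma' (range N) (fun i => range (N-i)) (fun i j => f i * f j)]
    apply Finset.sum_nbij' (fun p => (⟨p.2, p.1 - p.2⟩ : (_ : ℕ) × ℕ))
      (fun p => (⟨p.1 + p.2, p.1⟩ : (_ : ℕ) × ℕ))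
    · intro a ha
      obtain ⟨n, i⟩ := a
      simp only [Finset.mem_sigma, mem_range] at ha ⊢
      omega
    · intro a ha
      obtain ⟨i, j⟩ := a
      simp only [Finset.mem_sigma, mem_range] at ha ⊢
      omega
    · intro a ha
      obtain ⟨n, i⟩ := a
      simp only [Finset.mem_sigma, mem_range] at ha
      have : i + (n - i) = n := by omega
      simp [this]
    · intro a ha
      obtain ⟨i, j⟩ := a
      simp only [Finset.mem_sigma, mem_range] at ha
      simp
    · intro a ha
      obtain ⟨n, i⟩ := a
      rfl
  rw [step1, sq, Finset.sum_mul_sum]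
  apply Finset.sum_le_sum
  intro i hi
  apply Finset.sum_le_sum_of_subset_of_nonneg
  · exact Finset.range_subset_range.mpr (by omega)
  · intro j _ _
    exact mul_nonneg (hf i) (hf j)

/-- For `μ ≥ 0` and `0 ≤ g ≤ g_c(μ)`, the sum `S = ∑ α_n(μ) g^n` satisfies the
leading-order Schwinger–Dyson equation `S = 1 + g·S²·(S² + μ)`. -/
theorem GLO_satisfies_SD (μ : ℝ) (hμ : 0 ≤ μ) (Gc : ℝ) (hGc1 : 1 < Gc)
    (hGcRoot : -3 * Gc ^ 3 + 4 * Gc ^ 2 - μ * Gc + 2 * μ = 0)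
    (gc : ℝ) (hgc : gc = (Gc - 1) / (Gc ^ 2 * (Gc ^ 2 + μ))) :
    ∀ g : ℝ, 0 ≤ g → g ≤ gc →
      (∑' n : ℕ, alphaCoeff μ n * g ^ n) =
        1 + g * (∑' n : ℕ, alphaCoeff μ n * g ^ n) ^ 2 *
          ((∑' n : ℕ, alphaCoeff μ n * g ^ n) ^ 2 + μ) := by

  intro g hg0 hgle
  set a : ℕ → ℝ := fun n => alphaCoeff μ n * g ^ n with ha_def
  have ha0 : ∀ n, 0 ≤ a n := fun n => mul_nonneg (alphaCoeff_nonneg μ hμ n) (pow_nonneg hg0 n)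
  have ha_zero : a 0 = 1 := by simp [ha_def, alphaCoeff_zero]
  have hsucc : ∀ n, a (n+1) = g * (betaC μ 4 n * g^n) + g * μ * (betaC μ 2 n * g^n) := by
    intro n
    show alphaCoeff μ (n+1) * g^(n+1) = _
    rw [alphaCoeff_succ, pow_succ]
    ring
  have hb : ∀ n, ∑ i ∈ range (n+1), a i * a (n-i) = betaC μ 2 n * g^n := by
    intro n
    rw [betaC_two, Finset.sum_mul]
    apply Finset.sum_congr rfl
    intro i hi
    rw [mem_range] at hi
    show alphaCoeff μ i * g^i * (alphaCoeff μ (n-i) * g^(n-i)) = _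
    have hgp : g^i * g^(n-i) = g^n := by
      rw [← pow_add]
      congr 1
      omega
    calc alphaCoeff μ i * g^i * (alphaCoeff μ (n-i) * g^(n-i))
        = alphaCoeff μ i * alphaCoeff μ (n-i) * (g^i * g^(n-i)) := by ring
      _ = alphaCoeff μ i * alphaCoeff μ (n-i) * g^n := by rw [hgp]
  have hc : ∀ n, ∑ i ∈ range (n+1),
      (betaC μ 2 i * g^i) * (betaC μ 2 (n-i) * g^(n-i)) = betaC μ 4 n * g^n := by
    intro n
    rw [betaC_four, Finset.sum_mul]
    apply Finset.sum_congr rfl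
    intro i hi
    rw [mem_range] at hi
    have hgp : g^i * g^(n-i) = g^n := by
      rw [← pow_add]
      congr 1
      omega
    calc betaC μ 2 i * g^i * (betaC μ 2 (n-i) * g^(n-i))
        = betaC μ 2 i * betaC μ 2 (n-i) * (g^i * g^(n-i)) := by ring
      _ = betaC μ 2 i * betaC μ 2 (n-i) * g^n := by rw [hgp]
  -- bound on partial sums
  have hGc0 : (0:ℝ) < Gc := by linarith
  have hD : (0:ℝ) < Gc^2*(Gc^2+μ) := by positivity
  have hgc0 : 0 ≤ gc := by
    rw [hgc]
    apply div_nonneg (by linarith) (le_of_lt hD)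
  have hgcmul : gc * (Gc^2*(Gc^2+μ)) = Gc - 1 := by
    rw [hgc]
    field_simp
  have hP : ∀ N, ∑ n ∈ range N, a n ≤ Gc := by
    intro N
    induction N with
    | zero => simp; linarith
    | succ N ihN =>
      rw [Finset.sum_range_succ', ha_zero, Finset.sum_congr rfl (fun n _ => hsucc n),
        Finset.sum_add_distrib, ← Finset.mul_sum, ← Finset.mul_sum]
      set P := ∑ n ∈ range N, a n with hPdef
      set B2 := ∑ n ∈ range N, betaC μ 2 n * g^n with hB2def
      set B4 := ∑ n ∈ range N, betaC μ 4 n * g^n with hB4def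
      have hP0 : 0 ≤ P := Finset.sum_nonneg fun n _ => ha0 n
      have hB20 : 0 ≤ B2 := Finset.sum_nonneg fun n _ =>
        mul_nonneg (betaC_nonneg μ hμ 2 n) (pow_nonneg hg0 n)
      have hB40 : 0 ≤ B4 := Finset.sum_nonneg fun n _ =>
        mul_nonneg (betaC_nonneg μ hμ 4 n) (pow_nonneg hg0 n)
      have hB2P : B2 ≤ P^2 := by
        have e : B2 = ∑ n ∈ range N, ∑ i ∈ range (n+1), a i * a (n-i) :=
          Finset.sum_congr rfl fun n _ => (hb n).symm
        rw [e, hPdef]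
        exact conv_partial_le a ha0 N
      have hB4B : B4 ≤ B2^2 := by
        have e : B4 = ∑ n ∈ range N, ∑ i ∈ range (n+1),
            (betaC μ 2 i * g^i) * (betaC μ 2 (n-i) * g^(n-i)) :=
          Finset.sum_congr rfl fun n _ => (hc n).symm
        rw [e, hB2def]
        exact conv_partial_le (fun n => betaC μ 2 n * g^n)
          (fun n => mul_nonneg (betaC_nonneg μ hμ 2 n) (pow_nonneg hg0 n)) N
      have hPle : P ≤ Gc := ihN
      have hP2 : P^2 ≤ Gc^2 := pow_le_pow_left₀ hP0 hPle 2
      have hB2Gc : B2 ≤ Gc^2 := le_trans hB2P hP2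
      have hB4Gc : B4 ≤ Gc^4 := by
        calc B4 ≤ B2^2 := hB4B
          _ ≤ (Gc^2)^2 := pow_le_pow_left₀ hB20 hB2Gc 2
          _ = Gc^4 := by ring
      have h1 : g * B4 ≤ gc * Gc^4 :=
        mul_le_mul hgle hB4Gc hB40 hgc0
      have h2 : g * μ * B2 ≤ gc * μ * Gc^2 :=
        mul_le_mul (mul_le_mul_of_nonneg_right hgle hμ) hB2Gc hB20
          (mul_nonneg hgc0 hμ)
      have e : gc*Gc^4 + gc*μ*Gc^2 = Gc - 1 := by linear_combination hgcmul
      linarith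
  -- summability
  have hsum : Summable a := summable_of_sum_range_le ha0 hP
  have hnorm : Summable (fun n => ‖a n‖) := by
    simpa [Real.norm_eq_abs] using hsum.abs
  have hS2 : (∑' n, a n)^2 = ∑' n, betaC μ 2 n * g^n := by
    rw [sq, tsum_mul_tsum_eq_tsum_sum_range_of_summable_norm hnorm hnorm]
    exact tsum_congr hb
  have hb_sum : Summable (fun n => betaC μ 2 n * g^n) := by
    have h0 := (summable_norm_sum_mul_range_of_summable_norm hnorm hnorm).of_norm
    rwa [show (fun n => ∑ k ∈ range (n+1), a k * a (n-k))
      = (fun n => betaC μ 2 n * g^n) from funext hb] at h0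
  have hbnorm : Summable (fun n => ‖betaC μ 2 n * g^n‖) := by
    simp only [Real.norm_eq_abs]
    exact hb_sum.abs
  have hc_sum : Summable (fun n => betaC μ 4 n * g^n) := by
    have h0 := (summable_norm_sum_mul_range_of_summable_norm hbnorm hbnorm).of_norm
    rwa [show (fun n => ∑ k ∈ range (n+1), (betaC μ 2 k * g^k) * (betaC μ 2 (n-k) * g^(n-k)))
      = (fun n => betaC μ 4 n * g^n) from funext hc] at h0
  have hS4 : (∑' n, a n)^2 * (∑' n, a n)^2 = ∑' n, betaC μ 4 n * g^n := by
    rw [hS2, tsum_mul_tsum_eq_tsum_sum_range_of_summable_norm hbnorm hbnorm]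
    exact tsum_congr hc
  -- conclusion
  have expand : g * (∑' n, a n)^2 * ((∑' n, a n)^2 + μ)
      = ∑' n, (g * (betaC μ 4 n * g^n) + g * μ * (betaC μ 2 n * g^n)) := by
    have h1 : g * (∑' n, a n)^2 * ((∑' n, a n)^2 + μ)
        = g * ((∑' n, a n)^2 * (∑' n, a n)^2) + g * μ * (∑' n, a n)^2 := by ring
    rw [h1, hS4, hS2, ← tsum_mul_left, ← tsum_mul_left,
      ← Summable.tsum_add (hc_sum.mul_left g) (hb_sum.mul_left (g*μ))]
  rw [expand, tsum_congr (fun n => (hsucc n).symm), Summable.tsum_eq_zero_add hsum, ha_zero]
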